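/- Let E be a Banach space, L > 0, and ∅ ≠ M ⊆ E × ℝ. Suppose that for each point m = (e, t) ∈ M there exists a functional e*_m ∈ E* with ‖e*_m‖ ≤ L such that t + e*_m(ẽ − e) ≤ t̃ for every (ẽ, t̃) ∈ M. Then there exists a convex L-Lipschitz function g : E → ℝ whose graph contains M. -/
import Mathlib


open Set

noncomputable section

/-- If every point of M ⊆ E × ℝ admits a uniformly bounded affine minorant supporting M,
then M lies on the graph of a convex L-Lipschitz function. -/
theorem stmt6 {E : Type*} [NormedAddCommGroup E] [NormedSpace ℝ E] [CompleteSpace E]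
    (L : ℝ) (hL : 0 < L) (M : Set (E × ℝ)) (hM : M.Nonempty)
    (h : ∀ m ∈ M, ∃ f : E →L[ℝ] ℝ, ‖f‖ ≤ L ∧
      ∀ m' ∈ M, m.2 + f (m'.1 - m.1) ≤ m'.2) :
    ∃ g : E → ℝ, ConvexOn ℝ univ g ∧ LipschitzWith (Real.toNNReal L) g ∧
      ∀ m ∈ M, g m.1 = m.2 := by
  classical
  set F : E × ℝ → (E →L[ℝ] ℝ) := fun m =>
    if hm : m ∈ M then (h m hm).choose else 0 with hF
  have hFnorm : ∀ m ∈ M, ‖F m‖ ≤ L := by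
    intro m hm
    simp only [hF, dif_pos hm]
    exact (h m hm).choose_spec.1
  have hFsupp : ∀ m ∈ M, ∀ m' ∈ M, m.2 + F m (m'.1 - m.1) ≤ m'.2 := by
    intro m hm
    simp only [hF, dif_pos hm]
    exact (h m hm).choose_spec.2
  have hFle : ∀ m ∈ M, ∀ z : E, F m z ≤ L * ‖z‖ := by
    intro m hm z
    calc F m z ≤ ‖F m z‖ := le_abs_self _
    _ ≤ ‖F m‖ * ‖z‖ := (F m).le_opNorm z
    _ ≤ L * ‖z‖ := by
        exact mul_le_mul_of_nonneg_right (hFnorm m hm) (norm_nonneg _)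
  set g : E → ℝ := fun x => sSup ((fun m : E × ℝ => m.2 + F m (x - m.1)) '' M) with hg
  obtain ⟨m0, hm0⟩ := hM
  have hne : ∀ x : E, ((fun m : E × ℝ => m.2 + F m (x - m.1)) '' M).Nonempty :=
    fun x => ⟨_, ⟨m0, hm0, rfl⟩⟩
  have hbdd : ∀ x : E, BddAbove ((fun m : E × ℝ => m.2 + F m (x - m.1)) '' M) := by
    intro x
    refine ⟨m0.2 + L * ‖x - m0.1‖, ?_⟩
    rintro y ⟨m, hm, rfl⟩
    dsimp only
    have hx : x - m.1 = (m0.1 - m.1) + (x - m0.1) := by abel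
    rw [hx, map_add]
    have h1 : m.2 + F m (m0.1 - m.1) ≤ m0.2 := hFsupp m hm m0 hm0
    have h2 : F m (x - m0.1) ≤ L * ‖x - m0.1‖ := hFle m hm _
    linarith
  have hmem : ∀ x : E, ∀ m ∈ M, m.2 + F m (x - m.1) ≤ g x := by
    intro x m hm
    exact le_csSup (hbdd x) ⟨m, hm, rfl⟩
  refine ⟨g, ?_, ?_, ?_⟩
  · refine ⟨convex_univ, ?_⟩
    intro x _ y _ a b ha hb hab
    refine csSup_le (hne _) ?_
    rintro z ⟨m, hm, rfl⟩
    dsimp only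
    have hx : a • x + b • y - m.1 = a • (x - m.1) + b • (y - m.1) := by
      have h1 : m.1 = a • m.1 + b • m.1 := by rw [← add_smul, hab, one_smul]
      rw [smul_sub, smul_sub]
      nth_rewrite 1 [h1]
      abel
    have hFx : F m (a • x + b • y - m.1) = a * F m (x - m.1) + b * F m (y - m.1) := by
      rw [hx, map_add, map_smul, map_smul]; rfl
    have e1 : m.2 + F m (x - m.1) ≤ g x := hmem x m hm
    have e2 : m.2 + F m (y - m.1) ≤ g y := hmem y m hm
    have : m.2 + F m (a • x + b • y - m.1)
        = a * (m.2 + F m (x - m.1)) + b * (m.2 + F m (y - m.1)) := by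
      rw [hFx]; linear_combination (-m.2) * hab
    rw [this]
    have := mul_le_mul_of_nonneg_left e1 ha
    have := mul_le_mul_of_nonneg_left e2 hb
    simp only [smul_eq_mul]
    linarith
  · have key : ∀ x y : E, g x ≤ g y + L * ‖x - y‖ := by
      intro x y
      refine csSup_le (hne _) ?_
      rintro z ⟨m, hm, rfl⟩
      dsimp only
      have hx : x - m.1 = (y - m.1) + (x - y) := by abel
      rw [hx, map_add]
      have h1 : m.2 + F m (y - m.1) ≤ g y := hmem y m hm
      have h2 : F m (x - y) ≤ L * ‖x - y‖ := hFle m hm _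
      linarith
    refine LipschitzWith.of_dist_le_mul ?_
    intro x y
    rw [Real.dist_eq, Real.coe_toNNReal L hL.le, dist_eq_norm]
    rw [abs_sub_le_iff]
    constructor
    · linarith [key x y]
    · have := key y x
      rw [norm_sub_rev] at this
      linarith
  · rintro ⟨e, t⟩ hm
    refine le_antisymm ?_ ?_
    · refine csSup_le (hne _) ?_
      rintro z ⟨m, hm', rfl⟩
      dsimp only
      exact hFsupp m hm' (e, t) hm
    · have := hmem e (e, t) hm
      simpa using this
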